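/- arXiv:1804.05043 — 3 statements merged into one kernel-verified Lean document; each statement's English description precedes it below -/
import Mathlib

section
/- Let A be a finite commutative local ring of length two. Then the residue field of A is a finite field F_q for some prime power q, and A is isomorphic to either F_q[t]/(t²) or W₂(F_q). -/
open Polynomial

lemma stmt2_unit {R K : Type*} [CommRing R] [Field K] (π : R →+* K)
    (hsurj : Function.Surjective π)
    (hker : ∀ x y : R, π x = 0 → π y = 0 → x * y = 0)
    {x : R} (hx : π x ≠ 0) : IsUnit x := by
  obtain ⟨y, hy⟩ := hsurj (π x)⁻¹
  have h1 : π (x * y - 1) = 0 := by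
    simp [map_mul, hy, mul_inv_cancel₀ hx]
  have h2 : (x * y - 1) * (x * y - 1) = 0 := hker _ _ h1 h1
  refine IsUnit.of_mul_eq_one (a := x) (y * (2 - x * y)) ?_
  linear_combination -h2

lemma stmt2_master {p : ℕ} [Fact p.Prime] {K : Type*} [Field K] [Finite K]
    (χ : ZMod p →+* K) {ζ : K} {f : Polynomial (ZMod p)}
    (hf0 : f.eval₂ χ ζ = 0)
    (hsep : IsCoprime f (derivative f))
    (hgen : ∀ x : K, ∃ q : Polynomial (ZMod p), q.eval₂ χ ζ = x)
    (hcardK : Nat.card K = p ^ f.natDegree)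
    {ft : Polynomial (ZMod (p ^ 2))} (hmon : ft.Monic)
    (hmap : ft.map (ZMod.castHom (dvd_pow_self p two_ne_zero) (ZMod p)) = f)
    (R : Type*) [CommRing R] [Finite R] (π : R →+* K) (hsurj : Function.Surjective π)
    (hker : ∀ x y : R, π x = 0 → π y = 0 → x * y = 0)
    (hsp : ∀ x : R, π x = 0 → ∃ y, x = (p : R) * y)
    (hcard : Nat.card R = Nat.card K ^ 2) :
    Nonempty (AdjoinRoot ft ≃+* R) := by
  haveI : Nontrivial R := π.domain_nontrivial
  set φ : ZMod (p ^ 2) →+* ZMod p := ZMod.castHom (dvd_pow_self p two_ne_zero) (ZMod p) with hφ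
  -- characteristic of R divides p^2
  have hpR : π ((p : ℕ) : R) = 0 := by
    rw [map_natCast]
    rw [show ((p : ℕ) : K) = χ ((p : ℕ) : ZMod p) from (map_natCast χ p).symm]
    simp
  have hp2R : (((p ^ 2 : ℕ) : ℕ) : R) = 0 := by
    push_cast
    rw [sq]
    exact hker _ _ hpR hpR
  have hdvd : ringChar R ∣ p ^ 2 := ringChar.dvd hp2R
  let ψ : ZMod (p ^ 2) →+* R := ZMod.castHom hdvd R
  have hcompat : π.comp ψ = χ.comp φ := Subsingleton.elim _ _
  have keyeval : ∀ (q : Polynomial (ZMod (p ^ 2))) (r : R),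
      π (q.eval₂ ψ r) = (q.map φ).eval₂ χ (π r) := by
    intro q r
    rw [Polynomial.hom_eval₂, hcompat, Polynomial.eval₂_map]
  -- Hensel lifting
  obtain ⟨r₀, hr₀⟩ := hsurj ζ
  set c : R := ft.eval₂ ψ r₀ with hc_def
  set d : R := (derivative ft).eval₂ ψ r₀ with hd_def
  have hc : π c = 0 := by rw [hc_def, keyeval, hmap, hr₀, hf0]
  have hd : π d = (derivative f).eval₂ χ ζ := by
    rw [hd_def, keyeval, hr₀, ← hmap, Polynomial.derivative_map]
  have hfd : (derivative f).eval₂ χ ζ ≠ 0 := by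
    obtain ⟨a, b, hab⟩ := hsep
    intro h
    have := congrArg (Polynomial.eval₂RingHom χ ζ) hab
    simp [hf0, h] at this
  have hdu : IsUnit d := stmt2_unit π hsurj hker (by rw [hd]; exact hfd)
  set u := hdu.unit with hu
  set r : R := r₀ - c * ↑u⁻¹ with hr_def
  have hcc : c * c = 0 := hker _ _ hc hc
  have hdd : d * (↑u⁻¹ : Rˣ) = 1 := by
    have : (↑u : R) = d := hdu.unit_spec
    rw [← this]
    exact u.mul_inv
  have hroot : ft.eval₂ ψ r = 0 := by
    rw [Polynomial.eval₂_eq_eval_map]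
    obtain ⟨kk, hk⟩ := (ft.map ψ).binomExpansion r₀ (-(c * ↑u⁻¹))
    have hr' : r = r₀ + -(c * ↑u⁻¹) := by rw [hr_def]; ring
    rw [hr']
    have hevc : (ft.map ψ).eval r₀ = c := by rw [hc_def, Polynomial.eval₂_eq_eval_map]
    have hevd : (derivative (ft.map ψ)).eval r₀ = d := by
      rw [hd_def, Polynomial.derivative_map, Polynomial.eval₂_eq_eval_map]
    rw [hk, hevc, hevd]
    linear_combination - c * hdd + kk * ((↑u⁻¹ : R) * (↑u⁻¹ : R)) * hcc
  have hπr : π r = ζ := by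
    rw [hr_def, map_sub, map_mul, hc, zero_mul, sub_zero, hr₀]
  -- the homomorphism
  set Φ : AdjoinRoot ft →+* R := AdjoinRoot.lift ψ r hroot with hΦ
  have hrange : ∀ x : K, ∃ b : AdjoinRoot ft, π (Φ b) = x := by
    intro x
    obtain ⟨q, hq⟩ := hgen x
    obtain ⟨qt, hqt⟩ := Polynomial.map_surjective φ (ZMod.ringHom_surjective φ) q
    exact ⟨AdjoinRoot.mk ft qt, by rw [hΦ, AdjoinRoot.lift_mk, keyeval, hqt, hπr, hq]⟩
  have hsurjΦ : Function.Surjective Φ := by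
    intro a
    obtain ⟨b₀, hb₀⟩ := hrange (π a)
    obtain ⟨y, hy⟩ := hsp (a - Φ b₀) (by rw [map_sub, hb₀, sub_self])
    obtain ⟨b₁, hb₁⟩ := hrange (π y)
    have hyb : (p : R) * (y - Φ b₁) = 0 := hker _ _ hpR (by rw [map_sub, hb₁, sub_self])
    refine ⟨b₀ + (p : AdjoinRoot ft) * b₁, ?_⟩
    have : a = Φ b₀ + (p : R) * Φ b₁ := by
      have : a - Φ b₀ = (p : R) * Φ b₁ := by
        rw [hy]
        linear_combination hyb
      linear_combination this
    rw [map_add, map_mul, map_natCast, ← this]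
  -- cardinality
  haveI : Fact (1 < p ^ 2) := ⟨by have := (Fact.out : p.Prime).two_le; nlinarith⟩
  set pb := AdjoinRoot.powerBasis' hmon with hpb
  have e := pb.basis.equivFun
  haveI : Finite (AdjoinRoot ft) := Finite.of_equiv _ e.toEquiv.symm
  have hcardB : Nat.card (AdjoinRoot ft) = (p ^ 2) ^ ft.natDegree := by
    rw [Nat.card_congr e.toEquiv, Nat.card_fun, Nat.card_zmod,
      Nat.card_eq_fintype_card, Fintype.card_fin, AdjoinRoot.powerBasis'_dim]
  have hdeg : ft.natDegree = f.natDegree := by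
    rw [← hmap, hmon.natDegree_map]
  have hcards : Nat.card (AdjoinRoot ft) = Nat.card R := by
    rw [hcardB, hcard, hcardK, hdeg, ← pow_mul, ← pow_mul, mul_comm]
  haveI : Fintype (AdjoinRoot ft) := Fintype.ofFinite _
  haveI : Fintype R := Fintype.ofFinite _
  have hbij : Function.Bijective Φ := by
    rw [Fintype.bijective_iff_surjective_and_card]
    exact ⟨hsurjΦ, by rw [← Nat.card_eq_fintype_card, ← Nat.card_eq_fintype_card]; exact hcards⟩
  exact ⟨RingEquiv.ofBijective Φ hbij⟩

section helpers

lemma stmt2_adjoinRoot_equiv {S : Type*} [CommRing S] {g : S[X]} (hmon : g.Monic) :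
    Nonempty (AdjoinRoot g ≃ (Fin g.natDegree → S)) := by
  classical
  let pb := AdjoinRoot.powerBasis' hmon
  exact ⟨pb.basis.equivFun.toEquiv.trans (Equiv.arrowCongr
    (finCongr (AdjoinRoot.powerBasis'_dim hmon)) (Equiv.refl S))⟩

end helpers

/-- Let `A` be a finite commutative local ring of length two.  Then the residue field of
`A` is a finite field `𝔽_q` for some prime power `q`, and `A` is isomorphic to either
`𝔽_q[t]/(t²)` or `W₂(𝔽_q)`. -/
theorem stmt_2 (A : Type*) [CommRing A] [IsLocalRing A] [Finite A]
    (hlen : ∃ s : CompositionSeries (Submodule A A),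
      s.head = ⊥ ∧ s.last = ⊤ ∧ s.length = 2) :
    (∃ p n : ℕ, p.Prime ∧ 0 < n ∧ Nat.card (IsLocalRing.ResidueField A) = p ^ n) ∧
      (Nonempty (A ≃+* (Polynomial (IsLocalRing.ResidueField A) ⧸
          Ideal.span {(Polynomial.X : Polynomial (IsLocalRing.ResidueField A)) ^ 2})) ∨
        ∃ (p : ℕ) (_ : Fact p.Prime),
          Nonempty (A ≃+* TruncatedWittVector p 2 (IsLocalRing.ResidueField A))) := by
  classical
  obtain ⟨s, hh, hl, hlen2⟩ := hlen
  set m : Ideal A := IsLocalRing.maximalIdeal A with hm_def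
  set k := IsLocalRing.ResidueField A with hk_def
  set π : A →+* k := IsLocalRing.residue A with hπ_def
  have hπsurj : Function.Surjective π := Ideal.Quotient.mk_surjective
  have hπmem : ∀ x : A, π x = 0 ↔ x ∈ m := fun x => Ideal.Quotient.eq_zero_iff_mem
  -- extract the two covering steps
  have step0 : s.toFun ⟨0, by omega⟩ ⋖ s.toFun ⟨1, by omega⟩ := s.step ⟨0, by omega⟩
  have step1 : s.toFun ⟨1, by omega⟩ ⋖ s.toFun ⟨2, by omega⟩ := s.step ⟨1, by omega⟩
  have h0 : s.toFun ⟨0, by omega⟩ = (⊥ : Submodule A A) := by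
    rw [← hh]; rfl
  have h2 : s.toFun ⟨2, by omega⟩ = (⊤ : Submodule A A) := by
    rw [← hl]
    congr 1
    exact Fin.ext (by simp [hlen2])
  rw [h0] at step0
  rw [h2] at step1
  have hmax : Ideal.IsMaximal (s.toFun ⟨1, by omega⟩ : Ideal A) :=
    Ideal.isMaximal_def.mpr (covBy_top_iff.mp step1)
  have h1 : s.toFun ⟨1, by omega⟩ = m := IsLocalRing.eq_maximalIdeal hmax
  rw [h1] at step0
  -- m is an "atom": any nonzero element spans it
  have hspan : ∀ x : A, x ∈ m → x ≠ 0 → Ideal.span {x} = m := by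
    intro x hx hne
    have h1 : Ideal.span {x} ≤ m := (Ideal.span_singleton_le_iff_mem m).mpr hx
    rcases lt_or_eq_of_le h1 with hlt | he
    · exact absurd hlt (step0.2 (bot_lt_iff_ne_bot.mpr (by
        simpa [Ideal.span_singleton_eq_bot] using hne)))
    · exact he
  -- m * m = 0
  have hmm : m * m = ⊥ := by
    by_contra hne
    have hle : m * m ≤ m := Ideal.mul_le_right
    have heq : m * m = m := by
      rcases lt_or_eq_of_le hle with hlt | he
      · exact absurd hlt (step0.2 (bot_lt_iff_ne_bot.mpr hne))
      · exact he
    have hFG : m.FG := IsNoetherian.noetherian m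
    have hjac : m ≤ Ideal.jacobson ⊥ := by
      rw [IsLocalRing.jacobson_eq_maximalIdeal ⊥ bot_ne_top]
    have := Submodule.eq_bot_of_le_smul_of_le_jacobson_bot m m hFG
      (by rw [smul_eq_mul, heq]) hjac
    exact step0.lt.ne' (by rw [this])
  have hmul0 : ∀ x y : A, x ∈ m → y ∈ m → x * y = 0 := by
    intro x y hx hy
    have : x * y ∈ m * m := Ideal.mul_mem_mul hx hy
    rw [hmm] at this
    simpa using this
  have hker : ∀ x y : A, π x = 0 → π y = 0 → x * y = 0 := fun x y hx hy =>
    hmul0 x y ((hπmem x).mp hx) ((hπmem y).mp hy)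
  -- a nonzero element of m
  have hmne : m ≠ ⊥ := step0.lt.ne'
  obtain ⟨t, htm, htne⟩ := Submodule.exists_mem_ne_zero_of_ne_bot hmne
  -- cardinality of m
  haveI : Finite k := Finite.of_surjective π hπsurj
  haveI : Fintype k := Fintype.ofFinite k
  set ℓ : A →ₗ[A] A := LinearMap.toSpanSingleton A A t with hℓ_def
  have hℓrange : LinearMap.range ℓ = m := by
    rw [← LinearMap.span_singleton_eq_range]
    exact hspan t htm htne
  have hℓker : LinearMap.ker ℓ = m := by
    ext a
    simp only [LinearMap.mem_ker, hℓ_def, LinearMap.toSpanSingleton_apply, smul_eq_mul]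
    constructor
    · intro ha
      by_contra ham
      have : IsUnit a := by
        by_contra hu
        exact ham ((IsLocalRing.mem_maximalIdeal a).mpr (mem_nonunits_iff.mpr hu))
      obtain ⟨u, hu⟩ := this
      apply htne
      calc t = ↑u⁻¹ * (a * t) := by rw [← mul_assoc, ← hu, Units.inv_mul, one_mul]
      _ = 0 := by rw [ha, mul_zero]
    · intro ha
      exact hmul0 a t ha htm
  have hcardm : Nat.card ↥m = Nat.card k := by
    calc Nat.card ↥m = Nat.card ↥(LinearMap.range ℓ) := by rw [hℓrange]
      _ = Nat.card (A ⧸ LinearMap.ker ℓ) := (Nat.card_congr ℓ.quotKerEquivRange.toEquiv).symm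
      _ = Nat.card (A ⧸ m) := by rw [hℓker]
      _ = Nat.card k := rfl
  have hcardA : Nat.card A = Nat.card k ^ 2 := by
    have := AddSubgroup.card_eq_card_quotient_mul_card_addSubgroup
      ((m : Submodule A A).toAddSubgroup)
    have hquot : Nat.card (A ⧸ (m : Submodule A A).toAddSubgroup) = Nat.card k :=
      Nat.card_congr (Equiv.refl _)
    have hsub : Nat.card ↥((m : Submodule A A).toAddSubgroup) = Nat.card ↥m :=
      Nat.card_congr (Equiv.refl _)
    rw [hquot, hsub, hcardm] at this
    rw [this, sq]
  -- the characteristic of k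
  set p : ℕ := ringChar k with hp_def
  have hp : p.Prime := CharP.char_is_prime k p
  haveI hpfact : Fact p.Prime := ⟨hp⟩
  obtain ⟨nn, -, hcardk⟩ := FiniteField.card k p
  have hq : Nat.card k = p ^ (nn : ℕ) := by rw [Nat.card_eq_fintype_card, hcardk]
  refine ⟨⟨p, nn, hp, nn.pos, hq⟩, ?_⟩
  -- p vanishes in k
  have hπp : π ((p : ℕ) : A) = 0 := by
    rw [map_natCast]
    exact CharP.cast_eq_zero k p
  have hpm : ((p : ℕ) : A) ∈ m := (hπmem _).mp hπp
  by_cases hpA : ((p : ℕ) : A) = 0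
  · -- equal characteristic: A ≅ k[X]/(X²)
    left
    have hcharA : CharP A p := by
      have hdvd : ringChar A ∣ p := ringChar.dvd hpA
      rcases (Nat.Prime.eq_one_or_self_of_dvd hp _ hdvd) with h1 | h1
      · exact absurd h1 (CharP.char_ne_one A (ringChar A))
      · exact ringChar.of_eq h1
    haveI := hcharA
    -- Teichmüller lifting
    have hE2 : 2 ≤ Fintype.card k := by
      rw [hcardk]
      have h1 : 2 ≤ p ^ 1 := by simpa using hp.two_le
      calc 2 ≤ p ^ 1 := h1
        _ ≤ p ^ (nn : ℕ) := Nat.pow_le_pow_right hp.pos nn.pos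
    set l : k → A := Function.surjInv hπsurj with hl_def
    have hlπ : ∀ c : k, π (l c) = c := fun c => Function.surjInv_eq hπsurj c
    have wd : ∀ x y : A, π x = π y → x ^ Fintype.card k = y ^ Fintype.card k := by
      intro x y hxy
      have he : π (y - x) = 0 := by rw [map_sub, hxy, sub_self]
      have hz : (y - x) ^ Fintype.card k = 0 := by
        have h2 : (y - x) * (y - x) = 0 := hker _ _ he he
        calc (y - x) ^ Fintype.card k
            = (y - x) * (y - x) * (y - x) ^ (Fintype.card k - 2) := by
              rw [← pow_two, ← pow_add]; congr 1; omega
          _ = 0 := by rw [h2, zero_mul]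
      have : y ^ Fintype.card k = x ^ Fintype.card k := by
        rw [show y = x + (y - x) by ring, hcardk, add_pow_char_pow, ← hcardk, hz, add_zero]
      exact this.symm
    set σ : k →+* A :=
      { toFun := fun c => l c ^ Fintype.card k
        map_one' := by
          show l (1 : k) ^ Fintype.card k = 1
          rw [wd (l 1) 1 (by rw [hlπ, map_one]), one_pow]
        map_mul' := fun c d => by
          show l (c * d) ^ Fintype.card k = l c ^ Fintype.card k * l d ^ Fintype.card k
          rw [wd (l (c * d)) (l c * l d) (by rw [hlπ, map_mul, hlπ, hlπ]), mul_pow]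
        map_zero' := by
          show l (0 : k) ^ Fintype.card k = 0
          rw [wd (l 0) 0 (by rw [hlπ, map_zero]), zero_pow (by omega)]
        map_add' := fun c d => by
          show l (c + d) ^ Fintype.card k = l c ^ Fintype.card k + l d ^ Fintype.card k
          rw [wd (l (c + d)) (l c + l d) (by rw [hlπ, map_add, hlπ, hlπ]), hcardk,
            add_pow_char_pow] } with hσ_def
    have hπσ : ∀ c : k, π (σ c) = c := by
      intro c
      show π (l c ^ Fintype.card k) = c
      rw [map_pow, hlπ, FiniteField.pow_card]
    -- the homomorphism k[X] → A
    set Φ : k[X] →+* A := eval₂RingHom σ t with hΦ_def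
    have hΦX : Φ X = t := eval₂_X σ t
    have hΦC : ∀ c : k, Φ (C c) = σ c := fun c => eval₂_C σ t
    have hΦX2 : Φ (X ^ 2) = 0 := by
      rw [map_pow, hΦX, pow_two, hmul0 t t htm htm]
    have hliftable : ∀ a ∈ Ideal.span {(X : k[X]) ^ 2}, Φ a = 0 := by
      intro a ha
      obtain ⟨b, hb⟩ := Ideal.mem_span_singleton'.mp ha
      rw [← hb, map_mul, hΦX2, mul_zero]
    set Φq : (k[X] ⧸ Ideal.span {(X : k[X]) ^ 2}) →+* A :=
      Ideal.Quotient.lift _ Φ hliftable with hΦq_def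
    have hΦsurj : Function.Surjective Φ := by
      intro a
      have hea : a - σ (π a) ∈ m := by
        rw [← hπmem]
        rw [map_sub, hπσ, sub_self]
      obtain ⟨a', ha'⟩ := Ideal.mem_span_singleton'.mp ((hspan t htm htne) ▸ hea)
      have h2 : (a' - σ (π a')) * t = 0 := by
        refine hmul0 _ _ ?_ htm
        rw [← hπmem, map_sub, hπσ, sub_self]
      refine ⟨C (π a) + C (π a') * X, ?_⟩
      rw [map_add, map_mul, hΦX, hΦC, hΦC]
      linear_combination ha' - h2
    have hΦqsurj : Function.Surjective Φq := by
      intro a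
      obtain ⟨g, hg⟩ := hΦsurj a
      exact ⟨Ideal.Quotient.mk _ g, by rwa [hΦq_def, Ideal.Quotient.lift_mk]⟩
    -- cardinality
    have hX2mon : ((X : k[X]) ^ 2).Monic := monic_X_pow 2
    obtain ⟨eqv⟩ := stmt2_adjoinRoot_equiv hX2mon
    have hdeg : ((X : k[X]) ^ 2).natDegree = 2 := natDegree_X_pow 2
    haveI hfinQ : Finite (k[X] ⧸ Ideal.span {(X : k[X]) ^ 2}) := Finite.of_equiv _ eqv.symm
    have hcardQ : Nat.card (k[X] ⧸ Ideal.span {(X : k[X]) ^ 2}) = Nat.card k ^ 2 := by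
      have h1 : Nat.card (k[X] ⧸ Ideal.span {(X : k[X]) ^ 2})
          = Nat.card (Fin ((X : k[X]) ^ 2).natDegree → k) := Nat.card_congr eqv
      rw [h1, Nat.card_fun, Nat.card_eq_fintype_card (α := Fin _), Fintype.card_fin, hdeg]
    haveI : Fintype (k[X] ⧸ Ideal.span {(X : k[X]) ^ 2}) := Fintype.ofFinite _
    haveI : Fintype A := Fintype.ofFinite A
    have hbij : Function.Bijective Φq := by
      rw [Fintype.bijective_iff_surjective_and_card]
      refine ⟨hΦqsurj, ?_⟩
      rw [← Nat.card_eq_fintype_card, ← Nat.card_eq_fintype_card, hcardQ, hcardA]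
    exact ⟨(RingEquiv.ofBijective Φq hbij).symm⟩
  · -- mixed characteristic: A ≅ W₂(k)
    right
    refine ⟨p, hpfact, ?_⟩
    -- k-side data
    haveI : CharP k p := ringChar.charP k
    letI : Algebra (ZMod p) k := ZMod.algebra k p
    haveI : ExpChar k p := ExpChar.prime hp
    obtain ⟨ζ, hζ⟩ := Field.exists_primitive_element_of_finite_top (ZMod p) k
    have hint : IsIntegral (ZMod p) ζ := IsIntegral.of_finite (ZMod p) ζ
    set f : Polynomial (ZMod p) := minpoly (ZMod p) ζ with hf_def
    have hfmon : f.Monic := minpoly.monic hint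
    have hsep : IsCoprime f (derivative f) := Algebra.IsSeparable.isSeparable (ZMod p) ζ
    set χ : ZMod p →+* k := algebraMap (ZMod p) k with hχ_def
    have hf0 : f.eval₂ χ ζ = 0 := by rw [← aeval_def]; exact minpoly.aeval _ _
    have hadj : Algebra.adjoin (ZMod p) {ζ} = ⊤ := by
      rw [← IntermediateField.adjoin_simple_toSubalgebra_of_isAlgebraic hint.isAlgebraic, hζ]
      rfl
    have hgen : ∀ x : k, ∃ q : Polynomial (ZMod p), q.eval₂ χ ζ = x := by
      intro x
      have hx : x ∈ (Polynomial.aeval (R := ZMod p) ζ).range := by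
        rw [← Algebra.adjoin_singleton_eq_range_aeval (ZMod p) ζ, hadj]; trivial
      obtain ⟨q, hq⟩ := hx
      exact ⟨q, by rw [← aeval_def]; exact hq⟩
    have hcardK : Nat.card k = p ^ f.natDegree := by
      have h1 : Module.finrank (ZMod p) k = f.natDegree := by
        have := IntermediateField.adjoin.finrank hint
        rw [hζ, IntermediateField.finrank_top'] at this
        exact this
      have h2 : Fintype.card k = Fintype.card (ZMod p) ^ Module.finrank (ZMod p) k :=
        Module.card_eq_pow_finrank
      rw [Nat.card_eq_fintype_card, h2, ZMod.card, h1]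
    -- lift the minimal polynomial to ZMod (p^2)
    haveI : Fact (1 < p ^ 2) := ⟨by nlinarith [hp.two_le]⟩
    set φ21 : ZMod (p ^ 2) →+* ZMod p := ZMod.castHom (dvd_pow_self p two_ne_zero) (ZMod p)
      with hφ21
    obtain ⟨f0, hf0'⟩ := Polynomial.map_surjective φ21 (ZMod.ringHom_surjective φ21) f
    obtain ⟨ft, hftmap, -, hftmon⟩ :=
      Polynomial.lifts_and_degree_eq_and_monic ((Polynomial.mem_lifts f).mpr ⟨f0, hf0'⟩) hfmon
    -- apply the master lemma to A
    have hspA : ∀ x : A, π x = 0 → ∃ y, x = ((p : ℕ) : A) * y := by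
      intro x hx
      have hxm : x ∈ Ideal.span {((p : ℕ) : A)} := by
        rw [hspan _ hpm hpA]; exact (hπmem x).mp hx
      obtain ⟨y, hy⟩ := Ideal.mem_span_singleton'.mp hxm
      exact ⟨y, by rw [← hy, mul_comm]⟩
    obtain ⟨eA⟩ := stmt2_master χ hf0 hsep hgen hcardK hftmon hftmap A π hπsurj hker hspA hcardA
    -- now the truncated Witt vectors
    set T : WittVector p k →+* TruncatedWittVector p 2 k := WittVector.truncate 2 with hT
    have hTsurj : Function.Surjective T := WittVector.truncate_surjective p 2 k
    have hTout : Function.RightInverse (TruncatedWittVector.out (p := p) (n := 2) (R := k)) T :=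
      fun x => TruncatedWittVector.truncateFun_out x
    have hkerle : RingHom.ker T ≤ RingHom.ker (WittVector.constantCoeff (p := p) (R := k)) := by
      intro x hx
      have := (WittVector.mem_ker_truncate 2 x).mp hx 0 (by norm_num)
      rw [RingHom.mem_ker, WittVector.constantCoeff_apply, this]
    set πW : TruncatedWittVector p 2 k →+* k :=
      RingHom.liftOfRightInverse T _ hTout ⟨WittVector.constantCoeff, hkerle⟩ with hπW
    have hπWT : ∀ X : WittVector p k, πW (T X) = X.coeff 0 := fun X =>
      RingHom.liftOfRightInverse_comp_apply T _ hTout _ X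
    have hπWsurj : Function.Surjective πW := by
      intro c
      refine ⟨T (WittVector.mk p (fun _ => c)), ?_⟩
      rw [hπWT]
      rw [WittVector.coeff_mk]
    -- splitting off a Verschiebung
    have hVsplit : ∀ X : WittVector p k, X.coeff 0 = 0 →
        X = WittVector.verschiebung (WittVector.mk p (fun n => X.coeff (n + 1))) := by
      intro X hX
      ext n
      cases n with
      | zero => rw [WittVector.verschiebung_coeff_zero, hX]
      | succ n =>
          rw [WittVector.verschiebung_coeff_succ, WittVector.coeff_mk]
    have hVzero : ∀ Z : WittVector p k,
        T (WittVector.verschiebung (WittVector.verschiebung Z)) = 0 := by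
      intro Z
      rw [← RingHom.mem_ker, WittVector.mem_ker_truncate]
      intro i hi
      interval_cases i
      · rw [WittVector.verschiebung_coeff_zero]
      · show (WittVector.verschiebung (WittVector.verschiebung Z)).coeff (Nat.succ 0) = 0
        rw [WittVector.verschiebung_coeff_succ, WittVector.verschiebung_coeff_zero]
    have hkerW : ∀ x y : TruncatedWittVector p 2 k, πW x = 0 → πW y = 0 → x * y = 0 := by
      intro x y hx hy
      obtain ⟨X, hX⟩ := hTsurj x
      obtain ⟨Y, hY⟩ := hTsurj y
      have hX0 : X.coeff 0 = 0 := by rw [← hπWT X, hX, hx]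
      have hY0 : Y.coeff 0 = 0 := by rw [← hπWT Y, hY, hy]
      rw [← hX, ← hY, ← map_mul]
      rw [hVsplit X hX0, hVsplit Y hY0]
      have hit := WittVector.iterate_verschiebung_mul (p := p) (R := k)
        (WittVector.mk p (fun n => X.coeff (n + 1))) (WittVector.mk p (fun n => Y.coeff (n + 1)))
        1 1
      simp only [Function.iterate_one] at hit
      rw [hit]
      have h2 : (⇑(WittVector.verschiebung (p := p) (R := k)))^[1 + 1] = fun z =>
          WittVector.verschiebung (WittVector.verschiebung z) := by
        funext z
        rw [Function.iterate_succ_apply', Function.iterate_one]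
      rw [h2]
      exact hVzero _
    have hspW : ∀ x : TruncatedWittVector p 2 k, πW x = 0 →
        ∃ y, x = ((p : ℕ) : TruncatedWittVector p 2 k) * y := by
      intro x hx
      obtain ⟨X, hX⟩ := hTsurj x
      have hX0 : X.coeff 0 = 0 := by rw [← hπWT X, hX, hx]
      set X' := WittVector.mk p (fun n => X.coeff (n + 1)) with hX'
      set Y := WittVector.mk p (fun n => (frobeniusEquiv k p).symm (X'.coeff n)) with hY'
      have hFY : WittVector.frobenius Y = X' := by
        ext n
        rw [WittVector.coeff_frobenius_charP]
        show (Y.coeff n) ^ p = X'.coeff n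
        rw [hY', WittVector.coeff_mk]
        rw [← frobenius_def, frobenius_apply_frobeniusEquiv_symm]
      have hXp : X = Y * ((p : ℕ) : WittVector p k) := by
        have := WittVector.verschiebung_frobenius (p := p) (R := k) Y
        rw [hFY] at this
        rw [← this]
        exact hVsplit X hX0
      refine ⟨T Y, ?_⟩
      rw [← hX, hXp, map_mul, map_natCast, mul_comm]
    have hcardW : Nat.card (TruncatedWittVector p 2 k) = Nat.card k ^ 2 := by
      have h1 : Nat.card (TruncatedWittVector p 2 k) = Nat.card (Fin 2 → k) :=
        Nat.card_congr (Equiv.refl (Fin 2 → k) : TruncatedWittVector p 2 k ≃ (Fin 2 → k))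
      rw [h1, Nat.card_fun, Nat.card_eq_fintype_card (α := Fin 2), Fintype.card_fin]
    obtain ⟨eW⟩ := stmt2_master χ hf0 hsep hgen hcardK hftmon hftmap
      (TruncatedWittVector p 2 k) πW hπWsurj hkerW hspW hcardW
    exact ⟨eA.symm.trans eW⟩
end

section
/- Let M be a finite group, N a normal p-subgroup of M, and P a Sylow p-subgroup of M. Suppose χ is a one-dimensional complex character of N that is stabilised by M (i.e. χ(mnm⁻¹) = χ(n) for all m ∈ M, n ∈ N) and that χ extends to a one-dimensional character of P. Then χ extends to a one-dimensional character of M. -/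
open Function MulAction Subgroup

/-- Let `M` be a finite group, `N` a normal `p`-subgroup of `M`, and `P` a Sylow
`p`-subgroup of `M` (so `N ⊆ P`).  Suppose `χ` is a one-dimensional complex character of
`N` stabilised by `M` which extends to a one-dimensional character of `P`.  Then `χ`
extends to a one-dimensional character of `M`. -/
theorem stmt_7 (M : Type*) [Group M] [Finite M] (p : ℕ) [Fact p.Prime]
    (N : Subgroup M) [hN : N.Normal] (hNp : IsPGroup p N)
    (P : Sylow p M) (hNP : N ≤ (P : Subgroup M))
    (χ : N →* ℂˣ)
    (hstab : ∀ (m : M) (n : N), χ ⟨m * n * m⁻¹, hN.conj_mem n n.2 m⟩ = χ n)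
    (hext : ∃ χP : (P : Subgroup M) →* ℂˣ, ∀ n : N, χP ⟨n, hNP n.2⟩ = χ n) :
    ∃ χM : M →* ℂˣ, ∀ n : N, χM n = χ n := by
  classical
  obtain ⟨χP, hχP⟩ := hext
  haveI : Fintype M := Fintype.ofFinite M
  haveI : (P : Subgroup M).FiniteIndex := ⟨Subgroup.index_ne_zero_of_finite⟩
  -- Key computation: the transfer of `χP` restricted to `N` is `χ ^ index`
  have key : ∀ n : N, (MonoidHom.transfer χP) (n : M) = χ n ^ (P : Subgroup M).index := by
    intro n
    letI := (P : Subgroup M).fintypeQuotientOfFiniteIndex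
    rw [MonoidHom.transfer_eq_prod_quotient_orbitRel_zpowers_quot]
    have hfac : ∀ q : Quotient (orbitRel (zpowers (n : M)) (M ⧸ (P : Subgroup M))),
        χP ⟨q.out.out⁻¹ * (n : M) ^ (minimalPeriod ((n : M) • ·) q.out) * q.out.out,
          QuotientGroup.out_conj_pow_minimalPeriod_mem (P : Subgroup M) (n : M) q.out⟩
          = χ n ^ minimalPeriod ((n : M) • ·) q.out := by
      intro q
      set x : M := q.out.out
      set k : ℕ := minimalPeriod ((n : M) • ·) q.out
      have hmemN : x⁻¹ * (n : M) ^ k * x ∈ N := by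
        have := hN.conj_mem ((n : M) ^ k) (by exact_mod_cast (n ^ k).2) x⁻¹
        simpa using this
      have h1 : χP ⟨x⁻¹ * (n : M) ^ k * x,
          QuotientGroup.out_conj_pow_minimalPeriod_mem (P : Subgroup M) (n : M) q.out⟩
          = χP ⟨(⟨x⁻¹ * (n : M) ^ k * x, hmemN⟩ : N), hNP hmemN⟩ := rfl
      rw [h1, hχP]
      have h2 : (⟨x⁻¹ * (n : M) ^ k * x, hmemN⟩ : N)
          = ⟨x⁻¹ * ((n ^ k : N) : M) * x⁻¹⁻¹, hN.conj_mem (n ^ k) (n ^ k).2 x⁻¹⟩ := by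
        ext
        simp
      rw [h2, hstab x⁻¹ (n ^ k), map_pow]
    rw [Fintype.prod_congr _ _ hfac, Finset.prod_pow_eq_pow_sum]
    congr 1
    have := Fintype.card_congr (selfEquivSigmaOrbits (zpowers (n : M)) (M ⧸ (P : Subgroup M)))
    rw [index_eq_card, Nat.card_eq_fintype_card, this, Fintype.card_sigma]
    exact Finset.sum_congr rfl fun q _ => minimalPeriod_eq_card ((n : M)) q.out
  -- χ n has p-power order
  obtain ⟨a, ha⟩ := hNp.exists_card_eq
  have hord : ∀ n : N, χ n ^ Nat.card N = 1 := by
    intro n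
    rw [← map_pow, pow_card_eq_one', map_one]
  -- index is coprime to card N
  have hcop : Nat.Coprime (P : Subgroup M).index (Nat.card N) := by
    rw [ha]
    exact (Nat.Coprime.pow_left a
      ((Fact.out : p.Prime).coprime_iff_not_dvd.mpr P.not_dvd_index)).symm
  rcases eq_or_lt_of_le (Nat.one_le_iff_ne_zero.mpr (Nat.card_pos (α := N)).ne') with h1 | h1
  · -- N is trivial
    refine ⟨1, fun n => ?_⟩
    have hn : n = 1 := by
      have : Subsingleton N := Nat.card_eq_one_iff_unique.mp h1.symm |>.1
      exact Subsingleton.elim n 1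
    simp [hn]
  · obtain ⟨m, -, hm⟩ := Nat.exists_mul_mod_eq_one_of_coprime hcop h1
    refine ⟨(MonoidHom.transfer χP) ^ m, fun n => ?_⟩
    have : ((MonoidHom.transfer χP) ^ m) (n : M) = χ n ^ ((P : Subgroup M).index * m) := by
      simp [MonoidHom.pow_apply, key, ← pow_mul]
    rw [this, ← Nat.div_add_mod ((P : Subgroup M).index * m) (Nat.card N), hm,
      pow_add, pow_mul, hord, one_pow, one_mul, pow_one]
end

section
/- Let G₂ be a finite group, G¹ ⊴ G₂ an abelian normal subgroup, H ≤ G₂ a subgroup, and ψ : G¹ → ℂ× a homomorphism stabilised by H (i.e. ψ(h x h⁻¹) = ψ(x) for all h ∈ H, x ∈ G¹). If ψ is trivial on H ∩ G¹, then ψ extends to a homomorphism H·G¹ → ℂ× which is trivial on H. -/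
open scoped Pointwise


/-- Let `G₂` be a group, `G¹ ⊴ G₂` an abelian normal subgroup, `H ≤ G₂` a subgroup, and
`ψ : G¹ → ℂˣ` a homomorphism stabilised by `H`.  If `ψ` is trivial on `H ∩ G¹`, then `ψ`
extends to a homomorphism `H·G¹ → ℂˣ` which is trivial on `H`. -/
theorem stmt_12 (G₂ : Type*) [Group G₂] (G1 H : Subgroup G₂) [hn : G1.Normal]
    (hab : ∀ a b : G₂, a ∈ G1 → b ∈ G1 → a * b = b * a)
    (ψ : G1 →* ℂˣ)
    (hstab : ∀ h ∈ H, ∀ x : G1, ψ ⟨h * x * h⁻¹, hn.conj_mem x x.2 h⟩ = ψ x)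
    (htriv : ∀ x : G1, (x : G₂) ∈ H → ψ x = 1) :
    ∃ ψ' : (H ⊔ G1 : Subgroup G₂) →* ℂˣ,
      (∀ x : G1, ψ' ⟨x, (le_sup_right : G1 ≤ H ⊔ G1) x.2⟩ = ψ x) ∧
      (∀ (h : G₂) (hh : h ∈ H), ψ' ⟨h, (le_sup_left : H ≤ H ⊔ G1) hh⟩ = 1) := by
  classical
  -- conjugation-invariance in a convenient form
  have hstab' : ∀ h ∈ H, ∀ (x : G₂) (hx : x ∈ G1) (hx' : h * x * h⁻¹ ∈ G1),
      ψ ⟨h * x * h⁻¹, hx'⟩ = ψ ⟨x, hx⟩ := by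
    intro h hh x hx hx'
    have := hstab h hh ⟨x, hx⟩
    convert this using 2
  -- decomposition of elements of H ⊔ G1
  have hdecomp : ∀ g : (H ⊔ G1 : Subgroup G₂),
      ∃ h x : G₂, h ∈ H ∧ x ∈ G1 ∧ (g : G₂) = h * x := by
    rintro ⟨g, hg⟩
    have hg' : g ∈ ((H : Set G₂) * (G1 : Set G₂)) := by
      rw [← Subgroup.mul_normal]; exact hg
    obtain ⟨h, hh, x, hx, rfl⟩ := hg'
    exact ⟨h, x, hh, hx, rfl⟩
  -- well-definedness of ψ on decompositions
  have hwd : ∀ (h1 x1 h2 x2 : G₂) (hh1 : h1 ∈ H) (hx1 : x1 ∈ G1) (hh2 : h2 ∈ H)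
      (hx2 : x2 ∈ G1), h1 * x1 = h2 * x2 → ψ ⟨x1, hx1⟩ = ψ ⟨x2, hx2⟩ := by
    intro h1 x1 h2 x2 hh1 hx1 hh2 hx2 heq
    have h3 : x2 * x1⁻¹ = h2⁻¹ * h1 := by
      have : h2⁻¹ * (h1 * x1) * x1⁻¹ = h2⁻¹ * (h2 * x2) * x1⁻¹ := by rw [heq]
      simpa [mul_assoc] using this.symm
    have hmemG : x2 * x1⁻¹ ∈ G1 := mul_mem hx2 (inv_mem hx1)
    have hmemH : x2 * x1⁻¹ ∈ H := h3 ▸ mul_mem (inv_mem hh2) hh1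
    have h1' : ψ ⟨x2 * x1⁻¹, hmemG⟩ = 1 := htriv ⟨x2 * x1⁻¹, hmemG⟩ hmemH
    have h2' : (⟨x2 * x1⁻¹, hmemG⟩ : G1) = ⟨x2, hx2⟩ * (⟨x1, hx1⟩ : G1)⁻¹ := rfl
    rw [h2', map_mul, map_inv] at h1'
    have := mul_eq_one_iff_eq_inv.mp h1'
    rw [this, inv_inv]
  choose hf xf hfH xfG hprod using hdecomp
  set f : (H ⊔ G1 : Subgroup G₂) → ℂˣ := fun g => ψ ⟨xf g, xfG g⟩ with hfdef
  -- value of f on any decomposition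
  have hval : ∀ (g : (H ⊔ G1 : Subgroup G₂)) (h x : G₂) (hh : h ∈ H) (hx : x ∈ G1),
      (g : G₂) = h * x → f g = ψ ⟨x, hx⟩ := by
    intro g h x hh hx hgx
    exact hwd (hf g) (xf g) h x (hfH g) (xfG g) hh hx ((hprod g).symm.trans hgx)
  have hmul : ∀ a b : (H ⊔ G1 : Subgroup G₂), f (a * b) = f a * f b := by
    intro a b
    obtain ⟨h1, x1, hh1, hx1, he1⟩ : ∃ h x : G₂, h ∈ H ∧ x ∈ G1 ∧ (a : G₂) = h * x :=
      ⟨hf a, xf a, hfH a, xfG a, hprod a⟩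
    obtain ⟨h2, x2, hh2, hx2, he2⟩ : ∃ h x : G₂, h ∈ H ∧ x ∈ G1 ∧ (b : G₂) = h * x :=
      ⟨hf b, xf b, hfH b, xfG b, hprod b⟩
    have hconj : h2⁻¹ * x1 * h2 ∈ G1 := by
      have := hn.conj_mem x1 hx1 h2⁻¹
      simpa using this
    have hxmem : (h2⁻¹ * x1 * h2) * x2 ∈ G1 := mul_mem hconj hx2
    have hdec : ((a * b : (H ⊔ G1 : Subgroup G₂)) : G₂) = (h1 * h2) * ((h2⁻¹ * x1 * h2) * x2) := by
      push_cast
      rw [he1, he2]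
      group
    have := hval (a * b) (h1 * h2) _ (mul_mem hh1 hh2) hxmem hdec
    rw [this]
    have hsplit : (⟨(h2⁻¹ * x1 * h2) * x2, hxmem⟩ : G1) =
        (⟨h2⁻¹ * x1 * h2, hconj⟩ : G1) * ⟨x2, hx2⟩ := rfl
    rw [hsplit, map_mul]
    have hc : ψ ⟨h2⁻¹ * x1 * h2, hconj⟩ = ψ ⟨x1, hx1⟩ := by
      have := hstab' h2⁻¹ (inv_mem hh2) x1 hx1 (by simpa using hconj)
      rw [← this]
      congr 1
      ext
      simp
    rw [hc, hval a h1 x1 hh1 hx1 he1, hval b h2 x2 hh2 hx2 he2]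
  refine ⟨MonoidHom.mk' f hmul, ?_, ?_⟩
  · intro x
    have := hval ⟨x, (le_sup_right : G1 ≤ H ⊔ G1) x.2⟩ 1 x (one_mem H) x.2 (by simp)
    simpa using this
  · intro h hh
    have := hval ⟨h, (le_sup_left : H ≤ H ⊔ G1) hh⟩ h 1 hh (one_mem G1) (by simp)
    rw [show (⟨(1 : G₂), one_mem G1⟩ : G1) = 1 from rfl, map_one] at this
    simpa using this
end
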